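/- Let q ≥ 5, let t(q) be the smallest size of an almost complete subset of a nondegenerate conic in PG(2,q), and suppose an integer w < (q+3)/2 satisfies w - (q-1)·ln((q+1)/(q+1-w)) ≤ ln(1/(q√(3q ln q))). Then t(q) ≤ w + 1 + √(q/(3 ln q)). -/

import Mathlib

open scoped Classical

noncomputable section
set_option linter.unusedSectionVars false
set_option maxHeartbeats 1000000

/-- The projective plane `PG(2,q)` over a field `F` (with `q = #F`). -/
abbrev PG2 (F : Type) [Field F] : Type := Projectivization F (Fin 3 → F)

variable {F : Type} [Field F] [Fintype F]

/-- Three points of `PG(2,q)` are collinear if they lie in a common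
projective line, i.e. a common 2-dimensional linear subspace. -/
def Collinear3 (a b c : PG2 F) : Prop :=
  ∃ W : Submodule F (Fin 3 → F), Module.finrank F W = 2 ∧
    a.rep ∈ W ∧ b.rep ∈ W ∧ c.rep ∈ W


instance : Finite (PG2 F) := Quotient.finite _

instance : Fintype (PG2 F) := Fintype.ofFinite _

/-- reps of distinct projective points are linearly independent -/
lemma indep_of_ne {a b : PG2 F} (h : a ≠ b) : LinearIndependent F ![a.rep, b.rep] := by
  rw [LinearIndependent.pair_iff]
  intro s t hst
  by_contra hc
  rcases eq_or_ne t 0 with rfl | ht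
  · simp only [smul_zero, zero_smul, add_zero] at hst
    rcases smul_eq_zero.1 hst with hs | hb
    · exact hc ⟨hs, rfl⟩
    · exact a.rep_nonzero hb
  · have hbt : t • b.rep = (-s) • a.rep := by
      have h0 : t • b.rep + s • a.rep = 0 := by rw [add_comm]; exact hst
      have h1 := eq_neg_of_add_eq_zero_left h0
      rw [h1, neg_smul]
    have hs0 : (-s) ≠ 0 := by
      intro h0
      rw [h0, zero_smul, smul_eq_zero] at hbt
      rcases hbt with h1 | h2
      · exact ht h1
      · exact b.rep_nonzero h2
    have : b = a := by
      conv_lhs => rw [← b.mk_rep]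
      conv_rhs => rw [← a.mk_rep]
      rw [Projectivization.mk_eq_mk_iff]
      refine ⟨(Units.mk0 _ ht)⁻¹ * Units.mk0 _ hs0, ?_⟩
      have h2 : ((Units.mk0 t ht)⁻¹ * Units.mk0 (-s) hs0 : Fˣ) • a.rep
          = (t⁻¹ : F) • ((-s) • a.rep) := by
        simp [Units.smul_def, smul_smul]
      rw [h2, ← hbt, smul_smul, inv_mul_cancel₀ ht, one_smul]
    exact h this.symm

lemma range_pair (x y : Fin 3 → F) : Set.range ![x, y] = {x, y} := by
  ext v
  simp [Matrix.range_cons, Matrix.range_empty]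
  tauto

lemma span_pair_finrank {a b : PG2 F} (h : a ≠ b) :
    Module.finrank F (Submodule.span F {a.rep, b.rep}) = 2 := by
  have := finrank_span_eq_card (R := F) (indep_of_ne h)
  rw [range_pair] at this
  simpa using this

lemma indep_of_ne' {a b : PG2 F} (h : a ≠ b) :
    ∀ s t : F, s • a.rep + t • b.rep = 0 → s = 0 ∧ t = 0 :=
  LinearIndependent.pair_iff.1 (indep_of_ne h)

/-- upper bound on the number of points of PG(2,q) -/
lemma card_PG2_le (q : ℕ) (hq : Fintype.card F = q) (hq2 : 2 ≤ q) :
    Fintype.card (PG2 F) ≤ q ^ 2 + q + 1 := by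
  classical
  set V' := {v : Fin 3 → F // v ≠ 0}
  have hcardV' : Fintype.card V' = q ^ 3 - 1 := by
    have h1 : Fintype.card V' = Fintype.card (Fin 3 → F) - Fintype.card {v : Fin 3 → F // v = 0} :=
      Fintype.card_subtype_compl _
    rw [h1, Fintype.card_subtype_eq, Fintype.card_fun, hq]
    simp
  -- the quotient map
  let f : V' → PG2 F := fun v => Projectivization.mk F v.1 v.2
  have hfib : ∀ b : PG2 F, q - 1 ≤ (Finset.univ.filter (fun v : V' => f v = b)).card := by
    intro b
    have : Fintype.card Fˣ ≤ (Finset.univ.filter (fun v : V' => f v = b)).card := by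
      apply Finset.card_le_card_of_injOn
        (fun u : Fˣ => ⟨(u : F) • b.rep, smul_ne_zero u.ne_zero b.rep_nonzero⟩)
      · intro u _
        simp only [Finset.mem_coe, Finset.mem_filter, Finset.mem_univ, true_and]
        show Projectivization.mk F ((u : F) • b.rep) _ = b
        conv_rhs => rw [← b.mk_rep]
        rw [Projectivization.mk_eq_mk_iff]
        exact ⟨u, rfl⟩
      · intro u _ u' _ huv
        have h1 : (u : F) • b.rep = (u' : F) • b.rep := congrArg Subtype.val huv
        obtain ⟨i, hi⟩ : ∃ i, b.rep i ≠ 0 := by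
          by_contra hc
          push_neg at hc
          exact b.rep_nonzero (funext hc)
        have := congrFun h1 i
        simp only [Pi.smul_apply, smul_eq_mul] at this
        exact Units.ext (mul_right_cancel₀ hi this)
    calc q - 1 = Fintype.card Fˣ := by rw [Fintype.card_units, hq]
    _ ≤ _ := this
  have hsum : Fintype.card V' = ∑ b : PG2 F, (Finset.univ.filter (fun v : V' => f v = b)).card := by
    rw [← Finset.card_univ]
    exact Finset.card_eq_sum_card_fiberwise (fun v _ => Finset.mem_univ (f v))
  have hge : Fintype.card (PG2 F) * (q - 1) ≤ q ^ 3 - 1 := by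
    rw [← hcardV', hsum]
    calc Fintype.card (PG2 F) * (q - 1) = ∑ _b : PG2 F, (q-1) := by
            rw [Finset.sum_const, ← Finset.card_univ, smul_eq_mul]
    _ ≤ _ := Finset.sum_le_sum (fun b _ => hfib b)
  have hfac : q ^ 3 - 1 = (q ^ 2 + q + 1) * (q - 1) := by
    have : 1 ≤ q := by omega
    cases' Nat.exists_eq_add_of_le this with m hm
    subst hm
    have h2 : (1 + m) - 1 = m := by omega
    rw [h2]
    have h3 : (1 + m) ^ 3 = ((1 + m) ^ 2 + (1 + m) + 1) * m + 1 := by ring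
    omega
  rw [hfac] at hge
  have hq1 : 0 < q - 1 := by omega
  exact Nat.le_of_mul_le_mul_right hge hq1

section Conic

variable (Q : QuadraticForm F (Fin 3 → F))

/-- expansion of Q on a linear combination -/
lemma Q_combo (x y : Fin 3 → F) (a b : F) :
    Q (a • x + b • y) = a * a * Q x + b * b * Q y + (a * b) * QuadraticMap.polar Q x y := by
  have h : Q (a • x + b • y) = Q (a • x) + Q (b • y) + QuadraticMap.polar Q (a • x) (b • y) := by
    rw [QuadraticMap.polar]; ring
  rw [h, QuadraticMap.map_smul, QuadraticMap.map_smul,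
    QuadraticMap.polar_smul_left, QuadraticMap.polar_smul_right]
  simp [smul_eq_mul]; ring

lemma exists_smul_rep (v : Fin 3 → F) (hv : v ≠ 0) :
    ∃ a : Fˣ, (Projectivization.mk F v hv).rep = (a : F) • v := by
  have h : Projectivization.mk F (Projectivization.mk F v hv).rep
      (Projectivization.rep_nonzero _) = Projectivization.mk F v hv := Projectivization.mk_rep _
  rw [Projectivization.mk_eq_mk_iff] at h
  obtain ⟨a, ha⟩ := h
  exact ⟨a, ha.symm⟩

end Conic

/-- A (projective) line of `PG(2,q)`: the point set of a 2-dimensional linear subspace. -/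
def IsLine (L : Set (PG2 F)) : Prop :=
  ∃ W : Submodule F (Fin 3 → F), Module.finrank F W = 2 ∧ L = {p : PG2 F | p.rep ∈ W}

/-- An arc: no three distinct points collinear. -/
def IsArc (C : Set (PG2 F)) : Prop :=
  ∀ a ∈ C, ∀ b ∈ C, ∀ c ∈ C, a ≠ b → b ≠ c → a ≠ c → ¬ Collinear3 a b c

/-- A nondegenerate conic: the zero locus of a quadratic form which is
a `(q+1)`-arc. -/
def IsConic (C : Set (PG2 F)) : Prop :=
  (∃ Q : QuadraticForm F (Fin 3 → F), C = {p : PG2 F | Q p.rep = 0}) ∧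
  IsArc C ∧ C.ncard = Fintype.card F + 1

/-- A tangent of `C`: a line meeting `C` in exactly one point. -/
def IsTangent (C L : Set (PG2 F)) : Prop := IsLine L ∧ (L ∩ C).ncard = 1

/-- A bisecant of `C`: a line meeting `C` in exactly two points. -/
def IsBisecant (C L : Set (PG2 F)) : Prop := IsLine L ∧ (L ∩ C).ncard = 2

/-- A point `P` is covered by a point set `K` if `P` is collinear with two
distinct points of `K` (i.e. `P` lies on a bisecant of `K`). -/
def Covered (K : Set (PG2 F)) (P : PG2 F) : Prop :=
  ∃ a ∈ K, ∃ b ∈ K, a ≠ b ∧ Collinear3 a b P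

/-- `O` is a nucleus of `C` if every tangent of `C` passes through `O`. -/
def IsNucleus (C : Set (PG2 F)) (O : PG2 F) : Prop :=
  ∀ L : Set (PG2 F), IsTangent C L → O ∈ L

/-- The point set `M_q`: all points off `C` (and also off the nucleus when `q` is even). -/
def Mset (C : Set (PG2 F)) : Set (PG2 F) :=
  if Even (Fintype.card F) then (Set.univ \ C) \ {O : PG2 F | IsNucleus C O}
  else Set.univ \ C

/-- An almost complete subset of the conic `C`: a proper subset of `C`
covering every point of `M_q`. -/
def IsACSubset (C S : Set (PG2 F)) : Prop :=
  S ⊂ C ∧ ∀ P ∈ Mset C, Covered S P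

/-- The smallest size of an almost complete subset of `C`. -/
noncomputable def tAC (C : Set (PG2 F)) : ℕ :=
  sInf {n : ℕ | ∃ S : Set (PG2 F), IsACSubset C S ∧ S.ncard = n}

section ConicLemmas

variable {Q : QuadraticForm F (Fin 3 → F)} {C : Set (PG2 F)}
variable (hCQ : C = {p : PG2 F | Q p.rep = 0})

include hCQ

lemma mem_C_iff (p : PG2 F) : p ∈ C ↔ Q p.rep = 0 := by rw [hCQ]; rfl

lemma mk_mem_C {v : Fin 3 → F} (hv : v ≠ 0) (hQv : Q v = 0) :
    Projectivization.mk F v hv ∈ C := by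
  rw [mem_C_iff hCQ]
  obtain ⟨a, ha⟩ := exists_smul_rep v hv
  rw [ha, QuadraticMap.map_smul, hQv, smul_eq_mul, mul_zero]

omit hCQ

lemma arc_line (hArc : IsArc C) (W : Submodule F (Fin 3 → F))
    (hW : Module.finrank F W = 2) : ({p ∈ C | p.rep ∈ W}).ncard ≤ 2 := by
  by_contra h
  push_neg at h
  obtain ⟨a, b, c, ha, hb, hc, hab, hac, hbc⟩ := (Set.two_lt_ncard_iff).1 h
  exact hArc a ha.1 b hb.1 c hc.1 hab hbc hac ⟨W, hW, ha.2, hb.2, hc.2⟩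

include hCQ

/-- For a conic point `c`, the polar form at `c` is not identically zero. -/
lemma pol_ne_zero_of_mem (hArc : IsArc C) (hCard : 2 ≤ C.ncard)
    {c : PG2 F} (hc : c ∈ C) : ∃ y, QuadraticMap.polar Q c.rep y ≠ 0 := by
  obtain ⟨c', hc', hne⟩ := Set.exists_ne_of_one_lt_ncard (s := C) (by omega) c
  refine ⟨c'.rep, fun hβ => ?_⟩
  have hcc' : c ≠ c' := hne.symm
  have hQc : Q c.rep = 0 := (mem_C_iff hCQ c).1 hc
  have hQc' : Q c'.rep = 0 := (mem_C_iff hCQ c').1 hc'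
  set v := c.rep + c'.rep with hv
  have hQv : Q v = 0 := by
    have h1 := Q_combo Q c.rep c'.rep 1 1
    simp only [one_smul, one_mul] at h1
    rw [hv, h1, hQc, hQc', hβ]; ring
  have hindep := indep_of_ne' hcc'
  have hv0 : v ≠ 0 := by
    intro h0
    have := hindep 1 1 (by rw [one_smul, one_smul, ← hv]; exact h0)
    exact one_ne_zero this.1
  set c'' := Projectivization.mk F v hv0 with hc''def
  have hc''C : c'' ∈ C := mk_mem_C hCQ hv0 hQv
  have hne1 : c ≠ c'' := by
    intro h0
    have hmk : Projectivization.mk F v hv0 = Projectivization.mk F c.rep c.rep_nonzero := by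
      rw [← hc''def, ← h0, Projectivization.mk_rep]
    rw [Projectivization.mk_eq_mk_iff] at hmk
    obtain ⟨a, ha⟩ := hmk
    rw [Units.smul_def] at ha
    have : (((a : F) - 1)) • c.rep + (-1 : F) • c'.rep = 0 := by
      rw [sub_smul, one_smul, ha, hv]; simp
    have := (hindep _ _ this).2
    simp at this
  have hne2 : c' ≠ c'' := by
    intro h0
    have hmk : Projectivization.mk F v hv0 = Projectivization.mk F c'.rep c'.rep_nonzero := by
      rw [← hc''def, ← h0, Projectivization.mk_rep]
    rw [Projectivization.mk_eq_mk_iff] at hmk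
    obtain ⟨a, ha⟩ := hmk
    rw [Units.smul_def] at ha
    have : (-1 : F) • c.rep + (((a : F) - 1)) • c'.rep = 0 := by
      rw [sub_smul, one_smul, ha, hv]; simp
    have := (hindep _ _ this).1
    simp at this
  obtain ⟨u, hu⟩ := exists_smul_rep v hv0
  have hW : Collinear3 c c' c'' := by
    refine ⟨Submodule.span F {c.rep, c'.rep}, span_pair_finrank hcc', ?_, ?_, ?_⟩
    · exact Submodule.subset_span (Set.mem_insert _ _)
    · exact Submodule.subset_span (Set.mem_insert_of_mem _ rfl)
    · rw [← hc''def] at hu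
      rw [hu, hv]
      exact Submodule.smul_mem _ _ (Submodule.add_mem _
        (Submodule.subset_span (Set.mem_insert _ _))
        (Submodule.subset_span (Set.mem_insert_of_mem _ rfl)))
  exact hArc c hc c' hc' c'' hc''C hcc' hne2 hne1 hW

lemma Mset_subset_off (P : PG2 F) (hP : P ∈ Mset C) : P ∉ C := by
  rw [Mset] at hP
  split_ifs at hP with hpar
  · exact hP.1.2
  · exact hP.2

omit hCQ

/-- kernel of a nonzero polar functional has rank 2 -/
lemma ker_polar_finrank {x : Fin 3 → F} (hx : ∃ y, QuadraticMap.polar Q x y ≠ 0) :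
    Module.finrank F (LinearMap.ker (Q.polarBilin x)) = 2 := by
  set φ := Q.polarBilin x with hφ
  have hφ0 : φ ≠ 0 := by
    obtain ⟨y, hy⟩ := hx
    intro h0
    apply hy
    have : φ y = 0 := by rw [h0]; rfl
    rwa [hφ, QuadraticMap.polarBilin_apply_apply] at this
  have h3 : Module.finrank F (Fin 3 → F) = 3 := by simp
  have hr := LinearMap.finrank_range_add_finrank_ker φ
  rw [h3] at hr
  have hrange : Module.finrank F (LinearMap.range φ) = 1 := by
    have hle : Module.finrank F (LinearMap.range φ) ≤ 1 := by
      have := Submodule.finrank_le (LinearMap.range φ)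
      rwa [Module.finrank_self] at this
    have hne : Module.finrank F (LinearMap.range φ) ≠ 0 := by
      intro h0
      exact hφ0 (LinearMap.range_eq_bot.1 (Submodule.finrank_eq_zero.1 h0))
    omega
  omega

include hCQ

/-- second intersection point of the line `Pc` with the conic -/
lemma exists_second {P c : PG2 F} (hP : P ∉ C) (hc : c ∈ C)
    (hβ : QuadraticMap.polar Q P.rep c.rep ≠ 0) :
    ∃ σ : PG2 F, σ ∈ C ∧ σ ≠ c ∧ σ.rep ∈ Submodule.span F {P.rep, c.rep} := by
  have hQP : Q P.rep ≠ 0 := fun h => hP ((mem_C_iff hCQ P).2 h)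
  have hQc : Q c.rep = 0 := (mem_C_iff hCQ c).1 hc
  have hPc : P ≠ c := fun h => hQP (h ▸ hQc)
  have hindep := indep_of_ne' hPc
  set β := QuadraticMap.polar Q P.rep c.rep with hβdef
  set v := β • P.rep + (-(Q P.rep)) • c.rep with hvdef
  have hQv : Q v = 0 := by
    rw [hvdef, Q_combo, hQc, ← hβdef]; ring
  have hv0 : v ≠ 0 := by
    intro h0
    exact hβ ((hindep β (-(Q P.rep)) (by rw [← hvdef]; exact h0)).1)
  refine ⟨Projectivization.mk F v hv0, mk_mem_C hCQ hv0 hQv, ?_, ?_⟩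
  · intro h0
    have hmk : Projectivization.mk F v hv0 = Projectivization.mk F c.rep c.rep_nonzero := by
      rw [← h0, Projectivization.mk_rep]
    rw [Projectivization.mk_eq_mk_iff] at hmk
    obtain ⟨a, ha⟩ := hmk
    rw [Units.smul_def] at ha
    have : β • P.rep + ((-(Q P.rep)) - (a : F)) • c.rep = 0 := by
      rw [sub_smul, ha, hvdef]; abel
    exact hβ (hindep _ _ this).1
  · obtain ⟨u, hu⟩ := exists_smul_rep v hv0
    rw [hu, hvdef]
    refine Submodule.smul_mem _ _ (Submodule.add_mem _
      (Submodule.smul_mem _ _ (Submodule.subset_span (Set.mem_insert _ _)))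
      (Submodule.smul_mem _ _ (Submodule.subset_span (Set.mem_insert_of_mem _ rfl))))

/-- For points of `Mset`, the polar form is not identically zero. -/
lemma pol_Mset_ne_zero (hArc : IsArc C) (hCard : 2 ≤ C.ncard)
    {P : PG2 F} (hP : P ∈ Mset C) : ∃ y, QuadraticMap.polar Q P.rep y ≠ 0 := by
  have hPC : P ∉ C := Mset_subset_off hCQ P hP
  have hQP : Q P.rep ≠ 0 := fun h => hPC ((mem_C_iff hCQ P).2 h)
  rw [Mset] at hP
  split_ifs at hP with hpar
  · -- q even: use that P is not a nucleus
    by_contra hcon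
    push_neg at hcon
    apply hP.2
    intro L hL
    obtain ⟨⟨W, hW2, hLW⟩, hL1⟩ := hL
    obtain ⟨c, hcL⟩ := Set.ncard_eq_one.1 hL1
    have hcmem : c ∈ L ∩ C := by rw [hcL]; rfl
    have hcC : c ∈ C := hcmem.2
    have hcW : c.rep ∈ W := by
      have := hcmem.1
      rw [hLW] at this
      exact this
    have hQc : Q c.rep = 0 := (mem_C_iff hCQ c).1 hcC
    -- every vector of W pairs to zero with c
    have hWpol : ∀ x ∈ W, QuadraticMap.polar Q c.rep x = 0 := by
      intro x hxW
      by_contra hpx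
      have hxnotspan : x ∉ Submodule.span F {c.rep} := by
        intro hxs
        obtain ⟨t, ht⟩ := Submodule.mem_span_singleton.1 hxs
        apply hpx
        rw [← ht, QuadraticMap.polar_smul_right, QuadraticMap.polar_self, hQc]
        simp
      have hind : ∀ s t : F, s • c.rep + t • x = 0 → s = 0 ∧ t = 0 := by
        intro s t hst
        rcases eq_or_ne t 0 with rfl | ht
        · simp only [zero_smul, add_zero, smul_eq_zero] at hst
          rcases hst with h1 | h2
          · exact ⟨h1, rfl⟩
          · exact absurd h2 c.rep_nonzero
        · exfalso
          apply hxnotspan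
          have hx : x = (-(t⁻¹ * s)) • c.rep := by
            have h0 : t • x + s • c.rep = 0 := by rw [add_comm]; exact hst
            have h1 := eq_neg_of_add_eq_zero_left h0
            have := congrArg (fun v => (t⁻¹ : F) • v) h1
            simp only [smul_smul, inv_mul_cancel₀ ht, one_smul, smul_neg] at this
            rw [neg_smul]
            exact this
          rw [hx]
          exact Submodule.smul_mem _ _ (Submodule.mem_span_singleton_self _)
      set β := QuadraticMap.polar Q c.rep x with hβdef
      set u := β • x + (-(Q x)) • c.rep with hudef
      have hQu : Q u = 0 := by
        rw [hudef, Q_combo, hQc, QuadraticMap.polar_comm, ← hβdef]; ring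
      have hu0 : u ≠ 0 := by
        intro h0
        apply hpx
        have : (-(Q x)) • c.rep + β • x = 0 := by rw [add_comm, ← hudef]; exact h0
        exact (hind _ _ this).2
      set σ := Projectivization.mk F u hu0 with hσdef
      have hσC : σ ∈ C := mk_mem_C hCQ hu0 hQu
      have hσL : σ ∈ L := by
        rw [hLW]
        obtain ⟨a, ha⟩ := exists_smul_rep u hu0
        show σ.rep ∈ W
        rw [← hσdef] at ha
        rw [ha, hudef]
        exact Submodule.smul_mem _ _ (Submodule.add_mem _
          (Submodule.smul_mem _ _ hxW) (Submodule.smul_mem _ _ hcW))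
      have hσc : σ = c := by
        have : σ ∈ L ∩ C := ⟨hσL, hσC⟩
        rw [hcL] at this
        exact this
      have hmk : Projectivization.mk F u hu0 = Projectivization.mk F c.rep c.rep_nonzero := by
        rw [← hσdef, hσc, Projectivization.mk_rep]
      rw [Projectivization.mk_eq_mk_iff] at hmk
      obtain ⟨a, ha⟩ := hmk
      rw [Units.smul_def] at ha
      apply hpx
      have : ((-(Q x)) - (a : F)) • c.rep + β • x = 0 := by
        rw [sub_smul, ha, hudef]; abel
      exact (hind _ _ this).2
    -- the kernel of the polar at c is exactly W
    have hφc := pol_ne_zero_of_mem hCQ hArc hCard hcC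
    have hker2 := ker_polar_finrank (Q := Q) hφc
    have hWle : W ≤ LinearMap.ker (Q.polarBilin c.rep) := by
      intro x hx
      rw [LinearMap.mem_ker, QuadraticMap.polarBilin_apply_apply]
      exact hWpol x hx
    have hWeq : W = LinearMap.ker (Q.polarBilin c.rep) :=
      Submodule.eq_of_le_of_finrank_le hWle (by rw [hker2, hW2])
    -- P lies in this kernel
    rw [hLW]
    show P.rep ∈ W
    rw [hWeq, LinearMap.mem_ker, QuadraticMap.polarBilin_apply_apply,
      QuadraticMap.polar_comm]
    exact hcon c.rep
  · -- q odd: polar P P = 2 Q P ≠ 0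
    refine ⟨P.rep, ?_⟩
    rw [QuadraticMap.polar_self]
    have h2 : (2 : F) ≠ 0 := by
      intro h20
      have hdvd : ringChar F ∣ 2 := ringChar.dvd (by exact_mod_cast h20)
      have hne1 : ringChar F ≠ 1 := CharP.ringChar_ne_one
      have hle2 := Nat.le_of_dvd (by norm_num) hdvd
      have hne0 : ringChar F ≠ 0 := by
        intro h
        rw [h, zero_dvd_iff] at hdvd
        norm_num at hdvd
      have h2' : ringChar F = 2 := by omega
      exact hpar (Nat.even_iff.2 ((FiniteField.even_card_iff_char_two).1 h2'))
    intro h0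
    have h1 : Q P.rep + Q P.rep = 0 := by rw [← two_nsmul]; exact h0
    have h2'' : (2 : F) * Q P.rep = 0 := by rw [two_mul]; exact h1
    rcases mul_eq_zero.1 h2'' with h | h
    · exact h2 h
    · exact hQP h

/-- at most two conic points are "bad" for a covered point P -/
lemma bad_le_two (hArc : IsArc C) (hCard : 2 ≤ C.ncard)
    {P : PG2 F} (hP : P ∈ Mset C) :
    ({c ∈ C | QuadraticMap.polar Q P.rep c.rep = 0}).ncard ≤ 2 := by
  have hφ := pol_Mset_ne_zero hCQ hArc hCard hP
  have hker2 := ker_polar_finrank (Q := Q) hφ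
  have hsub : {c ∈ C | QuadraticMap.polar Q P.rep c.rep = 0} ⊆
      {p ∈ C | p.rep ∈ LinearMap.ker (Q.polarBilin P.rep)} := by
    intro c hc
    refine ⟨hc.1, ?_⟩
    rw [LinearMap.mem_ker, QuadraticMap.polarBilin_apply_apply]
    exact hc.2
  exact le_trans (Set.ncard_le_ncard hsub) (arc_line hArc _ hker2)

end ConicLemmas

def Unc (C K : Set (PG2 F)) : Set (PG2 F) := {P ∈ Mset C | ¬ Covered K P}

lemma covered_mono {K K' : Set (PG2 F)} (h : K ⊆ K') {P : PG2 F} :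
    Covered K P → Covered K' P := by
  rintro ⟨a, ha, b, hb, hab, hcol⟩
  exact ⟨a, h ha, b, h hb, hab, hcol⟩

lemma unc_anti {C K K' : Set (PG2 F)} (h : K ⊆ K') : Unc C K' ⊆ Unc C K :=
  fun P hP => ⟨hP.1, fun hc => hP.2 (covered_mono h hc)⟩

section Counting

variable {Q : QuadraticForm F (Fin 3 → F)} {C : Set (PG2 F)}
variable (hCQ : C = {p : PG2 F | Q p.rep = 0})

include hCQ

lemma good_count (hArc : IsArc C) (hCard2 : 2 ≤ C.ncard)
    (S : Set (PG2 F)) (hS : S ⊆ C) {P : PG2 F} (hP : P ∈ Mset C)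
    (hPunc : ¬ Covered S P) :
    S.ncard - 2 ≤ ({c' ∈ C \ S | Covered (insert c' S) P}).ncard := by
  have hPC : P ∉ C := Mset_subset_off hCQ P hP
  set Bad := {c ∈ C | QuadraticMap.polar Q P.rep c.rep = 0} with hBad
  set G := S \ Bad with hG
  have hch : ∀ s, s ∈ G → ∃ σ : PG2 F, σ ∈ C ∧ σ ≠ s ∧
      σ.rep ∈ Submodule.span F {P.rep, s.rep} := by
    intro s hs
    have hsC : s ∈ C := hS hs.1
    have hβ : QuadraticMap.polar Q P.rep s.rep ≠ 0 := by
      intro h0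
      exact hs.2 ⟨hsC, h0⟩
    exact exists_second hCQ hPC hsC hβ
  choose! f hf1 hf2 hf3 using hch
  have hPnotin : ∀ s ∈ G, P ≠ s := by
    intro s hs h0
    exact hPC (h0 ▸ hS hs.1)
  have hcol : ∀ s ∈ G, Collinear3 s (f s) P := by
    intro s hs
    refine ⟨Submodule.span F {P.rep, s.rep}, span_pair_finrank (hPnotin s hs), ?_, ?_, ?_⟩
    · exact Submodule.subset_span (Set.mem_insert_of_mem _ rfl)
    · exact hf3 s hs
    · exact Submodule.subset_span (Set.mem_insert _ _)
  have hfS : ∀ s ∈ G, f s ∉ S := by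
    intro s hs hfsS
    exact hPunc ⟨s, hs.1, f s, hfsS, (hf2 s hs).symm, hcol s hs⟩
  have himg : f '' G ⊆ {c' ∈ C \ S | Covered (insert c' S) P} := by
    rintro _ ⟨s, hs, rfl⟩
    refine ⟨⟨hf1 s hs, hfS s hs⟩, ?_⟩
    exact ⟨s, Set.mem_insert_of_mem _ hs.1, f s, Set.mem_insert _ _,
      (hf2 s hs).symm, hcol s hs⟩
  have hinj : Set.InjOn f G := by
    intro s hs s' hs' hfe
    by_contra hne
    set σ := f s with hσ
    have hPσ : P ≠ σ := fun h0 => hPC (h0 ▸ hf1 s hs)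
    have hspan : ∀ t, t ∈ G → f t = σ →
        t.rep ∈ Submodule.span F {P.rep, σ.rep} := by
      intro t ht hfeq
      have hle : Submodule.span F {P.rep, σ.rep} ≤ Submodule.span F {P.rep, t.rep} := by
        apply Submodule.span_le.2
        rintro x (rfl | rfl)
        · exact Submodule.subset_span (Set.mem_insert _ _)
        · rw [← hfeq]
          exact hf3 t ht
      have heq : Submodule.span F {P.rep, σ.rep} = Submodule.span F {P.rep, t.rep} :=
        Submodule.eq_of_le_of_finrank_le hle
          (by rw [span_pair_finrank (hPnotin t ht), span_pair_finrank hPσ])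
      rw [heq]
      exact Submodule.subset_span (Set.mem_insert_of_mem _ rfl)
    have hcol3 : Collinear3 s s' σ := by
      refine ⟨Submodule.span F {P.rep, σ.rep}, span_pair_finrank hPσ,
        hspan s hs rfl, hspan s' hs' hfe.symm, ?_⟩
      exact Submodule.subset_span (Set.mem_insert_of_mem _ rfl)
    have hsσ : s ≠ σ := fun h0 => (hf2 s hs) (hσ ▸ h0.symm)
    have hs'σ : s' ≠ σ := fun h0 => (hf2 s' hs') (hfe ▸ hσ ▸ h0.symm)
    exact hArc s (hS hs.1) s' (hS hs'.1) σ (hf1 s hs) hne hs'σ hsσ hcol3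
  have h1 : G.ncard = (f '' G).ncard := (Set.ncard_image_of_injOn hinj).symm
  have h2 : (f '' G).ncard ≤ ({c' ∈ C \ S | Covered (insert c' S) P}).ncard :=
    Set.ncard_le_ncard himg
  have h3 : S.ncard ≤ G.ncard + 2 := by
    have hsub : S ⊆ G ∪ Bad := by
      intro s hs
      by_cases hb : s ∈ Bad
      · exact Set.mem_union_right _ hb
      · exact Set.mem_union_left _ ⟨hs, hb⟩
    calc S.ncard ≤ (G ∪ Bad).ncard := Set.ncard_le_ncard hsub
    _ ≤ G.ncard + Bad.ncard := Set.ncard_union_le _ _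
    _ ≤ G.ncard + 2 := by
        have hb2 : Bad.ncard ≤ 2 := bad_le_two hCQ hArc hCard2 hP
        omega
  omega

lemma step_exists (hArc : IsArc C) (q : ℕ) (hq : Fintype.card F = q)
    (hCard : C.ncard = q + 1) (hq2 : 2 ≤ q)
    (S : Set (PG2 F)) (hS : S ⊆ C) (hSn : S.ncard ≤ q) :
    ∃ c' ∈ C \ S, (q + 1 - S.ncard) * (Unc C (insert c' S)).ncard ≤
      ((q + 1 - S.ncard) - (S.ncard - 2)) * (Unc C S).ncard := by
  classical
  have hCard2 : 2 ≤ C.ncard := by omega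
  have hCfin : C.Finite := Set.toFinite _
  have hSfin : S.Finite := Set.toFinite _
  set i := S.ncard with hidef
  have hD : (C \ S).ncard = q + 1 - i := by
    rw [Set.ncard_diff hS, hCard]
  set Dfin := (C \ S).toFinset with hDfin
  have hDcard : Dfin.card = q + 1 - i := by
    rw [hDfin, ← Set.ncard_eq_toFinset_card']
    exact hD
  have hDne : Dfin.Nonempty := by
    rw [← Finset.card_pos, hDcard]
    omega
  set USfin := (Unc C S).toFinset with hUSdef
  have hUScard : USfin.card = (Unc C S).ncard := by
    rw [hUSdef, ← Set.ncard_eq_toFinset_card']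
  -- uncovered count after adding c' equals a filtered count over USfin
  have hfilt : ∀ c' ∈ Dfin, (Unc C (insert c' S)).ncard =
      (USfin.filter (fun P => P ∈ Unc C (insert c' S))).card := by
    intro c' _
    rw [Set.ncard_eq_toFinset_card']
    congr 1
    ext P
    simp only [Set.mem_toFinset, Finset.mem_filter, hUSdef, Set.mem_toFinset]
    constructor
    · intro h
      exact ⟨unc_anti (Set.subset_insert _ _) h, h⟩
    · intro h
      exact h.2
  -- pointwise bound for each uncovered P
  have hpoint : ∀ P ∈ USfin,
      (Dfin.filter (fun c' => P ∈ Unc C (insert c' S))).card ≤ (q + 1 - i) - (i - 2) := by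
    intro P hPUS
    rw [hUSdef, Set.mem_toFinset] at hPUS
    obtain ⟨hPM, hPunc⟩ := hPUS
    set covF := Dfin.filter (fun c' => Covered (insert c' S) P) with hcovF
    have hgood : i - 2 ≤ covF.card := by
      have := good_count hCQ hArc hCard2 S hS hPM hPunc
      have heq : ({c' ∈ C \ S | Covered (insert c' S) P}).ncard = covF.card := by
        rw [Set.ncard_eq_toFinset_card']
        congr 1
        ext c'
        simp only [Set.mem_toFinset, Finset.mem_filter, hcovF, hDfin, Set.mem_toFinset]
        exact Iff.rfl
      omega
    have hsub : Dfin.filter (fun c' => P ∈ Unc C (insert c' S)) ⊆ Dfin \ covF := by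
      intro c' hc'
      rw [Finset.mem_filter] at hc'
      rw [Finset.mem_sdiff]
      refine ⟨hc'.1, ?_⟩
      rw [hcovF, Finset.mem_filter]
      rintro ⟨-, hcov⟩
      exact hc'.2.2 hcov
    calc (Dfin.filter (fun c' => P ∈ Unc C (insert c' S))).card
        ≤ (Dfin \ covF).card := Finset.card_le_card hsub
    _ = Dfin.card - covF.card := Finset.card_sdiff_of_subset (Finset.filter_subset _ _)
    _ ≤ (q + 1 - i) - (i - 2) := by
        rw [hDcard]
        omega
  -- double counting
  have hsum : ∑ c' ∈ Dfin, (Unc C (insert c' S)).ncard ≤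
      (Unc C S).ncard * ((q + 1 - i) - (i - 2)) := by
    have h1 : ∑ c' ∈ Dfin, (Unc C (insert c' S)).ncard =
        ∑ c' ∈ Dfin, (USfin.filter (fun P => P ∈ Unc C (insert c' S))).card :=
      Finset.sum_congr rfl hfilt
    have h2 : ∑ c' ∈ Dfin, (USfin.filter (fun P => P ∈ Unc C (insert c' S))).card =
        ∑ P ∈ USfin, (Dfin.filter (fun c' => P ∈ Unc C (insert c' S))).card := by
      simp only [Finset.card_filter]
      exact Finset.sum_comm
    rw [h1, h2, ← hUScard]
    have := Finset.sum_le_card_nsmul USfin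
      (fun P => (Dfin.filter (fun c' => P ∈ Unc C (insert c' S))).card)
      ((q + 1 - i) - (i - 2)) hpoint
    rwa [smul_eq_mul] at this
  obtain ⟨c', hc'D, hmin⟩ := Finset.exists_min_image Dfin
    (fun c' => (Unc C (insert c' S)).ncard) hDne
  refine ⟨c', by rwa [hDfin, Set.mem_toFinset] at hc'D, ?_⟩
  have hlow : Dfin.card * (Unc C (insert c' S)).ncard ≤
      ∑ x ∈ Dfin, (Unc C (insert x S)).ncard := by
    have := Finset.card_nsmul_le_sum Dfin
      (fun x => (Unc C (insert x S)).ncard) ((Unc C (insert c' S)).ncard) hmin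
    rwa [smul_eq_mul] at this
  rw [hDcard] at hlow
  calc (q + 1 - i) * (Unc C (insert c' S)).ncard
      ≤ ∑ x ∈ Dfin, (Unc C (insert x S)).ncard := hlow
  _ ≤ (Unc C S).ncard * ((q + 1 - i) - (i - 2)) := hsum
  _ = ((q + 1 - i) - (i - 2)) * (Unc C S).ncard := Nat.mul_comm _ _

omit hCQ

lemma Mset_le (q : ℕ) (hq : Fintype.card F = q) (hq2 : 2 ≤ q)
    (hCard : C.ncard = q + 1) : (Mset C).ncard ≤ q ^ 2 := by
  have h1 : Mset C ⊆ Set.univ \ C := by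
    rw [Mset]
    split_ifs
    · exact Set.diff_subset
    · exact fun x hx => hx
  have h2 : (Set.univ \ C : Set (PG2 F)).ncard = (Set.univ : Set (PG2 F)).ncard - C.ncard :=
    Set.ncard_diff (Set.subset_univ C)
  have h3 : (Set.univ : Set (PG2 F)).ncard = Nat.card (PG2 F) := Set.ncard_univ _
  have h4 : Nat.card (PG2 F) = Fintype.card (PG2 F) := Nat.card_eq_fintype_card
  have h5 := card_PG2_le q hq hq2
  have := Set.ncard_le_ncard h1
  omega

include hCQ

lemma chain (hArc : IsArc C) (q : ℕ) (hq : Fintype.card F = q)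
    (hCard : C.ncard = q + 1) (hq5 : 5 ≤ q) (w : ℕ) (hw : 2 * w < q + 3) :
    ∀ n, 1 ≤ n → n ≤ w + 1 → ∃ T : Set (PG2 F), T ⊆ C ∧ T.ncard = n ∧
      ((Unc C T).ncard : ℝ) ≤ (q : ℝ) ^ 2 *
        ∏ j ∈ Finset.Ico 1 n, (((q : ℝ) + 3 - 2 * j) / ((q : ℝ) + 1 - j)) := by
  intro n
  induction n with
  | zero => omega
  | succ m ih =>
    intro h1 hle
    rcases Nat.eq_or_lt_of_le h1 with h1' | hm1
    · -- base case : m + 1 = 1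
      have hm0 : m = 0 := by omega
      subst hm0
      have hCne : C.Nonempty := Set.nonempty_of_ncard_ne_zero (by omega)
      obtain ⟨c, hc⟩ := hCne
      refine ⟨{c}, by simpa using hc, Set.ncard_singleton c, ?_⟩
      simp only [Finset.Ico_self, Finset.prod_empty, mul_one]
      have hU : (Unc C {c}).ncard ≤ (Mset C).ncard :=
        Set.ncard_le_ncard (fun P hP => hP.1)
      have hM := Mset_le (C := C) q hq (by omega) hCard
      have : ((Unc C {c}).ncard : ℝ) ≤ ((q ^ 2 : ℕ) : ℝ) := by
        exact_mod_cast le_trans hU hM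
      simpa using this
    · -- inductive step : 1 ≤ m
      have hm : 1 ≤ m := by omega
      obtain ⟨T, hTC, hTn, hTbound⟩ := ih hm (by omega)
      have hmq : m ≤ q := by omega
      obtain ⟨c', hc'D, hstep⟩ := step_exists hCQ hArc q hq hCard (by omega) T hTC
        (by omega)
      refine ⟨insert c' T, Set.insert_subset hc'D.1 hTC, ?_, ?_⟩
      · rw [Set.ncard_insert_of_notMem hc'D.2, hTn]
      rw [hTn] at hstep
      set u : ℕ := (Unc C T).ncard with hu
      set u' : ℕ := (Unc C (insert c' T)).ncard with hu'
      have hc1 : ((q + 1 - m : ℕ) : ℝ) = (q : ℝ) + 1 - m := by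
        rw [Nat.cast_sub (by omega)]
        push_cast
        ring
      have hc2 : ((q + 1 - m - (m - 2) : ℕ) : ℝ) ≤ (q : ℝ) + 3 - 2 * m := by
        have hn1 : (q + 1 - m - (m - 2) : ℕ) ≤ (q + 3 - 2 * m : ℕ) := by omega
        have hn2 : ((q + 3 - 2 * m : ℕ) : ℝ) = (q : ℝ) + 3 - 2 * m := by
          rw [Nat.cast_sub (by omega)]
          push_cast
          ring
        rw [← hn2]
        exact_mod_cast hn1
      have hpos : (0 : ℝ) < (q : ℝ) + 1 - m := by
        have : (m : ℝ) ≤ (q : ℝ) := by exact_mod_cast hmq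
        linarith
      have hR : ((q : ℝ) + 1 - m) * u' ≤ ((q : ℝ) + 3 - 2 * m) * u := by
        calc ((q : ℝ) + 1 - m) * u' = ((q + 1 - m : ℕ) : ℝ) * u' := by rw [hc1]
        _ ≤ ((q + 1 - m - (m - 2) : ℕ) : ℝ) * u := by exact_mod_cast hstep
        _ ≤ ((q : ℝ) + 3 - 2 * m) * u :=
            mul_le_mul_of_nonneg_right hc2 (Nat.cast_nonneg u)
      have hgpos : (0 : ℝ) ≤ ((q : ℝ) + 3 - 2 * m) / ((q : ℝ) + 1 - m) := by
        apply div_nonneg _ (le_of_lt hpos)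
        have : (2 * m : ℝ) ≤ (q : ℝ) + 2 := by
          have : (2 * m : ℕ) ≤ q + 2 := by omega
          exact_mod_cast this
        linarith
      have hu'le : (u' : ℝ) ≤ (((q : ℝ) + 3 - 2 * m) / ((q : ℝ) + 1 - m)) * u := by
        rw [div_mul_eq_mul_div, le_div_iff₀ hpos, mul_comm]
        exact hR
      calc (u' : ℝ) ≤ (((q : ℝ) + 3 - 2 * m) / ((q : ℝ) + 1 - m)) * u := hu'le
      _ ≤ (((q : ℝ) + 3 - 2 * m) / ((q : ℝ) + 1 - m)) *
            ((q : ℝ) ^ 2 * ∏ j ∈ Finset.Ico 1 m, (((q : ℝ) + 3 - 2 * j) / ((q : ℝ) + 1 - j))) :=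
          mul_le_mul_of_nonneg_left hTbound hgpos
      _ = (q : ℝ) ^ 2 * ∏ j ∈ Finset.Ico 1 (m + 1), (((q : ℝ) + 3 - 2 * j) / ((q : ℝ) + 1 - j)) := by
          rw [Finset.prod_Ico_succ_top hm]
          ring

end Counting

section Analytic

open Real Finset

lemma harmonic_log (q : ℕ) : ∀ w : ℕ, w ≤ q →
    Real.log ((q : ℝ) + 1) - Real.log ((q : ℝ) + 1 - w) ≤
      ∑ j ∈ Finset.Ico 1 (w + 1), 1 / ((q : ℝ) + 1 - j) := by
  intro w
  induction w with
  | zero => simp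
  | succ m ih =>
    intro hle
    have hm : m ≤ q := by omega
    have hprev := ih hm
    rw [Finset.sum_Ico_succ_top (by omega : 1 ≤ m + 1)]
    have hqm : (1 : ℝ) ≤ (q : ℝ) - m := by
      have : (m : ℝ) + 1 ≤ (q : ℝ) := by exact_mod_cast hle
      linarith
    have hkey : Real.log ((q : ℝ) + 1 - m) - Real.log ((q : ℝ) + 1 - (m + 1)) ≤
        1 / ((q : ℝ) + 1 - (m + 1)) := by
      push_cast
      have h1 : (0 : ℝ) < (q : ℝ) - m := by linarith
      have h2 : (0 : ℝ) < (q : ℝ) + 1 - m := by linarith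
      have hdiv : (0 : ℝ) < ((q : ℝ) + 1 - m) / ((q : ℝ) - m) := div_pos h2 h1
      have hlog := Real.log_le_sub_one_of_pos hdiv
      rw [Real.log_div (ne_of_gt h2) (ne_of_gt h1)] at hlog
      have heq : ((q : ℝ) + 1 - m) / ((q : ℝ) - m) - 1 = 1 / ((q : ℝ) - m) := by
        field_simp
        ring
      rw [heq] at hlog
      have : (q : ℝ) + 1 - (m + 1) = (q : ℝ) - m := by ring
      rw [this]
      linarith
    push_cast at hkey hprev ⊢
    linarith

lemma analytic_bound (q w : ℕ) (hq5 : 5 ≤ q) (hw : 2 * w < q + 3)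
    (hyp : (w : ℝ) - ((q : ℝ) - 1) * Real.log (((q : ℝ) + 1) / ((q : ℝ) + 1 - w)) ≤
      Real.log (1 / ((q : ℝ) * Real.sqrt (3 * q * Real.log q)))) :
    (q : ℝ) ^ 2 * ∏ j ∈ Finset.Ico 1 (w + 1), (((q : ℝ) + 3 - 2 * j) / ((q : ℝ) + 1 - j)) ≤
      Real.sqrt ((q : ℝ) / (3 * Real.log q)) := by
  have hq1 : (1 : ℝ) < (q : ℝ) := by exact_mod_cast (by omega : 1 < q)
  have hlq : 0 < Real.log q := Real.log_pos hq1
  have hwq : w ≤ q := by omega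
  have hw1 : (w : ℝ) ≤ ((q : ℝ) + 2) / 2 := by
    have : (2 * w : ℝ) ≤ (q : ℝ) + 2 := by exact_mod_cast (by omega : 2 * w ≤ q + 2)
    linarith
  -- each factor is at most an exponential
  have hfac : ∀ j ∈ Finset.Ico 1 (w + 1),
      ((q : ℝ) + 3 - 2 * j) / ((q : ℝ) + 1 - j) ≤
        Real.exp (1 - ((q : ℝ) - 1) * (1 / ((q : ℝ) + 1 - j))) := by
    intro j hj
    rw [Finset.mem_Ico] at hj
    have hjw : j ≤ w := by omega
    have hjq : (j : ℝ) ≤ (q : ℝ) := by exact_mod_cast (by omega : j ≤ q)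
    have hpos : (0 : ℝ) < (q : ℝ) + 1 - j := by linarith
    have hid : ((q : ℝ) + 3 - 2 * j) / ((q : ℝ) + 1 - j) =
        (1 - ((q : ℝ) - 1) * (1 / ((q : ℝ) + 1 - j))) + 1 := by
      field_simp
      ring
    rw [hid]
    exact Real.add_one_le_exp _
  -- bound the product by an exponential of a sum
  have hprod : ∏ j ∈ Finset.Ico 1 (w + 1), (((q : ℝ) + 3 - 2 * j) / ((q : ℝ) + 1 - j)) ≤
      Real.exp (∑ j ∈ Finset.Ico 1 (w + 1), (1 - ((q : ℝ) - 1) * (1 / ((q : ℝ) + 1 - j)))) := by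
    rw [Real.exp_sum]
    apply Finset.prod_le_prod
    · intro j hj
      rw [Finset.mem_Ico] at hj
      have hjw : j ≤ w := by omega
      have h2j : (2 * j : ℝ) ≤ (q : ℝ) + 2 := by
        exact_mod_cast (by omega : 2 * j ≤ q + 2)
      have hjq : (j : ℝ) ≤ (q : ℝ) := by exact_mod_cast (by omega : j ≤ q)
      apply div_nonneg <;> linarith
    · exact hfac
  -- evaluate the sum
  have hsum : ∑ j ∈ Finset.Ico 1 (w + 1), (1 - ((q : ℝ) - 1) * (1 / ((q : ℝ) + 1 - j))) =
      (w : ℝ) - ((q : ℝ) - 1) * ∑ j ∈ Finset.Ico 1 (w + 1), 1 / ((q : ℝ) + 1 - j) := by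
    rw [Finset.sum_sub_distrib, ← Finset.mul_sum]
    congr 1
    rw [Finset.sum_const, Nat.card_Ico]
    simp
  -- harmonic bound
  have hharm := harmonic_log q w hwq
  have hlogdiv : Real.log (((q : ℝ) + 1) / ((q : ℝ) + 1 - w)) =
      Real.log ((q : ℝ) + 1) - Real.log ((q : ℝ) + 1 - w) := by
    have h1 : (0 : ℝ) < (q : ℝ) + 1 := by linarith
    have h2 : (0 : ℝ) < (q : ℝ) + 1 - w := by
      have : (w : ℝ) ≤ ((q : ℝ) + 2) / 2 := hw1
      linarith
    exact Real.log_div (ne_of_gt h1) (ne_of_gt h2)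
  have hq1' : (0 : ℝ) ≤ (q : ℝ) - 1 := by linarith
  have hmono : (w : ℝ) - ((q : ℝ) - 1) * ∑ j ∈ Finset.Ico 1 (w + 1), 1 / ((q : ℝ) + 1 - j) ≤
      (w : ℝ) - ((q : ℝ) - 1) * Real.log (((q : ℝ) + 1) / ((q : ℝ) + 1 - w)) := by
    rw [hlogdiv]
    nlinarith [mul_le_mul_of_nonneg_left hharm hq1']
  -- positivity of the target quantity
  have hx : (0 : ℝ) < (q : ℝ) * Real.sqrt (3 * q * Real.log q) := by
    apply mul_pos (by linarith)
    apply Real.sqrt_pos.2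
    have : (0 : ℝ) < (q : ℝ) := by linarith
    positivity
  -- chain everything
  have hchain : ∏ j ∈ Finset.Ico 1 (w + 1), (((q : ℝ) + 3 - 2 * j) / ((q : ℝ) + 1 - j)) ≤
      1 / ((q : ℝ) * Real.sqrt (3 * q * Real.log q)) := by
    calc ∏ j ∈ Finset.Ico 1 (w + 1), (((q : ℝ) + 3 - 2 * j) / ((q : ℝ) + 1 - j))
        ≤ Real.exp (∑ j ∈ Finset.Ico 1 (w + 1), (1 - ((q : ℝ) - 1) * (1 / ((q : ℝ) + 1 - j)))) :=
          hprod
    _ ≤ Real.exp (Real.log (1 / ((q : ℝ) * Real.sqrt (3 * q * Real.log q)))) := by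
        apply Real.exp_le_exp.2
        rw [hsum]
        exact le_trans hmono hyp
    _ = 1 / ((q : ℝ) * Real.sqrt (3 * q * Real.log q)) := Real.exp_log (by positivity)
  -- identify the square root
  have hsqrt : (q : ℝ) ^ 2 * (1 / ((q : ℝ) * Real.sqrt (3 * q * Real.log q))) =
      Real.sqrt ((q : ℝ) / (3 * Real.log q)) := by
    have hq0 : (0 : ℝ) < (q : ℝ) := by linarith
    have harg : (q : ℝ) / (3 * Real.log q) = (q : ℝ) ^ 2 / (3 * q * Real.log q) := by
      field_simp
    rw [harg, Real.sqrt_div (by positivity), Real.sqrt_sq (le_of_lt hq0)]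
    field_simp
  calc (q : ℝ) ^ 2 * ∏ j ∈ Finset.Ico 1 (w + 1), (((q : ℝ) + 3 - 2 * j) / ((q : ℝ) + 1 - j))
      ≤ (q : ℝ) ^ 2 * (1 / ((q : ℝ) * Real.sqrt (3 * q * Real.log q))) :=
        mul_le_mul_of_nonneg_left hchain (by positivity)
  _ = Real.sqrt ((q : ℝ) / (3 * Real.log q)) := hsqrt

end Analytic

lemma w_ge_three (q w : ℕ) (hq5 : 5 ≤ q)
    (hyp : (w : ℝ) - ((q : ℝ) - 1) * Real.log (((q : ℝ) + 1) / ((q : ℝ) + 1 - w)) ≤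
      Real.log (1 / ((q : ℝ) * Real.sqrt (3 * q * Real.log q)))) : 3 ≤ w := by
  have hq1 : (1 : ℝ) < (q : ℝ) := by exact_mod_cast (by omega : 1 < q)
  have hq5' : (5 : ℝ) ≤ (q : ℝ) := by exact_mod_cast hq5
  have hlq : 0 < Real.log q := Real.log_pos hq1
  have hs1 : (1 : ℝ) ≤ Real.sqrt (3 * q * Real.log q) := by
    rw [show (1:ℝ) = Real.sqrt 1 by rw [Real.sqrt_one]]
    apply Real.sqrt_le_sqrt
    have hl2 : (0.6931471803 : ℝ) < Real.log 2 := Real.log_two_gt_d9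
    have : Real.log 2 ≤ Real.log q := by
      apply Real.log_le_log (by norm_num)
      linarith
    nlinarith
  have hx1 : (1 : ℝ) < (q : ℝ) * Real.sqrt (3 * q * Real.log q) := by nlinarith
  have hRHSneg : Real.log (1 / ((q : ℝ) * Real.sqrt (3 * q * Real.log q))) < 0 := by
    apply Real.log_neg
    · positivity
    · rw [div_lt_one (by positivity)]
      linarith
  by_contra hcon
  push_neg at hcon
  interval_cases w
  · -- w = 0
    push_cast at hyp
    rw [show ((q:ℝ) + 1 - 0) = (q:ℝ) + 1 by ring] at hyp
    rw [div_self (by linarith : (q:ℝ) + 1 ≠ 0), Real.log_one, mul_zero] at hyp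
    linarith
  · -- w = 1
    have h1 : Real.log (((q : ℝ) + 1) / ((q : ℝ) + 1 - 1)) ≤ 1 / (q : ℝ) := by
      have hpos : (0 : ℝ) < ((q : ℝ) + 1) / ((q : ℝ) + 1 - 1) := by
        rw [show ((q:ℝ) + 1 - 1) = (q:ℝ) by ring]
        positivity
      have := Real.log_le_sub_one_of_pos hpos
      rw [show ((q:ℝ) + 1 - 1) = (q:ℝ) by ring] at this ⊢
      have heq : ((q : ℝ) + 1) / (q : ℝ) - 1 = 1 / (q : ℝ) := by field_simp; ring
      linarith
    have h2 : ((q : ℝ) - 1) * Real.log (((q : ℝ) + 1) / ((q : ℝ) + 1 - 1)) ≤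
        ((q : ℝ) - 1) * (1 / (q : ℝ)) := by
      apply mul_le_mul_of_nonneg_left h1 (by linarith)
    have h3 : ((q : ℝ) - 1) * (1 / (q : ℝ)) < 1 := by
      rw [mul_one_div, div_lt_one (by linarith)]
      linarith
    push_cast at hyp
    linarith
  · -- w = 2
    have hpos : (0 : ℝ) < ((q : ℝ) + 1) / ((q : ℝ) + 1 - 2) := by
      apply div_pos <;> linarith
    have h1 := Real.log_le_sub_one_of_pos hpos
    have heq : ((q : ℝ) + 1) / ((q : ℝ) + 1 - 2) - 1 = 2 / ((q : ℝ) - 1) := by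
      rw [show ((q:ℝ) + 1 - 2) = (q:ℝ) - 1 by ring]
      have hne : (q:ℝ) - 1 ≠ 0 := ne_of_gt (by linarith)
      field_simp
      ring
    have h2 : ((q : ℝ) - 1) * Real.log (((q : ℝ) + 1) / ((q : ℝ) + 1 - 2)) ≤
        ((q : ℝ) - 1) * (2 / ((q : ℝ) - 1)) := by
      apply mul_le_mul_of_nonneg_left (by linarith) (by linarith)
    have h3 : ((q : ℝ) - 1) * (2 / ((q : ℝ) - 1)) = 2 := by
      rw [mul_comm, div_mul_cancel₀ _ (ne_of_gt (by linarith : (0:ℝ) < (q:ℝ) - 1))]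
    push_cast at hyp
    linarith

lemma size_room (q w : ℕ) (hq5 : 5 ≤ q) (hw : 2 * w < q + 3) :
    (w : ℝ) + 1 + Real.sqrt ((q : ℝ) / (3 * Real.log q)) < (q : ℝ) + 1 := by
  have hq5' : (5 : ℝ) ≤ (q : ℝ) := by exact_mod_cast hq5
  have hq1 : (1 : ℝ) < (q : ℝ) := by linarith
  have hlq1 : (1 : ℝ) ≤ Real.log q := by
    rw [Real.le_log_iff_exp_le (by linarith)]
    have := Real.exp_one_lt_d9
    linarith
  have hlq : 0 < Real.log q := by linarith
  have harg : (q : ℝ) / (3 * Real.log q) ≤ (q : ℝ) / 3 := by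
    apply div_le_div_of_nonneg_left (by linarith) (by norm_num)
    linarith
  have hsq : Real.sqrt ((q : ℝ) / (3 * Real.log q)) ≤ Real.sqrt ((q : ℝ) / 3) :=
    Real.sqrt_le_sqrt harg
  have hsq2 : Real.sqrt ((q : ℝ) / 3) < ((q : ℝ) - 2) / 2 := by
    rw [show ((q:ℝ) - 2)/2 = Real.sqrt ((((q:ℝ) - 2)/2)^2) from
      (Real.sqrt_sq (by linarith)).symm]
    apply Real.sqrt_lt_sqrt (by positivity)
    nlinarith
  have hw' : (w : ℝ) ≤ ((q : ℝ) + 2) / 2 := by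
    have : (2 * w : ℝ) ≤ (q : ℝ) + 2 := by exact_mod_cast (by omega : 2 * w ≤ q + 2)
    linarith
  linarith

/-- Implicit bound B: if `w - (q-1)·ln((q+1)/(q+1-w)) ≤ ln(1/(q√(3q ln q)))`
with `w < (q+3)/2`, then `t(q) ≤ w + 1 + √(q/(3 ln q))`. -/
theorem tAC_implicit_bound_B (q : ℕ) (hq : Fintype.card F = q) (hq5 : 5 ≤ q)
    (C : Set (PG2 F)) (hC : IsConic C)
    (w : ℕ) (hwq : 2 * w < q + 3)
    (hyp : (w : ℝ) - ((q : ℝ) - 1) * Real.log (((q : ℝ) + 1) / ((q : ℝ) + 1 - w)) ≤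
      Real.log (1 / ((q : ℝ) * Real.sqrt (3 * q * Real.log q)))) :
    (tAC C : ℝ) ≤ (w : ℝ) + 1 + Real.sqrt ((q : ℝ) / (3 * Real.log q)) := by
  obtain ⟨⟨Q, hCQ⟩, hArc, hCard0⟩ := hC
  rw [hq] at hCard0
  have hw3 := w_ge_three q w hq5 hyp
  obtain ⟨T, hTC, hTn, hTb⟩ := chain hCQ hArc q hq hCard0 hq5 w hwq (w + 1)
    (by omega) le_rfl
  have hNle : ((Unc C T).ncard : ℝ) ≤ Real.sqrt ((q : ℝ) / (3 * Real.log q)) :=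
    le_trans hTb (analytic_bound q w hq5 hwq hyp)
  have hCard2 : 2 ≤ C.ncard := by omega
  have hpatch : ∀ P, P ∈ Unc C T → ∃ c', c' ∈ C ∧ Covered (insert c' T) P := by
    intro P hP
    have hgc := good_count hCQ hArc hCard2 T hTC hP.1 hP.2
    rw [hTn] at hgc
    have hne : ({c' ∈ C \ T | Covered (insert c' T) P}).Nonempty :=
      Set.nonempty_of_ncard_ne_zero (by omega)
    obtain ⟨c', hc'⟩ := hne
    exact ⟨c', hc'.1.1, hc'.2⟩
  choose! g hg1 hg2 using hpatch
  set S := T ∪ g '' (Unc C T) with hSdef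
  have hSC : S ⊆ C := Set.union_subset hTC (by rintro _ ⟨P, hP, rfl⟩; exact hg1 P hP)
  have hcov : ∀ P ∈ Mset C, Covered S P := by
    intro P hPM
    by_cases hcT : Covered T P
    · exact covered_mono Set.subset_union_left hcT
    · have hPU : P ∈ Unc C T := ⟨hPM, hcT⟩
      apply covered_mono _ (hg2 P hPU)
      apply Set.insert_subset
      · exact Set.mem_union_right _ ⟨P, hPU, rfl⟩
      · exact Set.subset_union_left
  have hScard : S.ncard ≤ (w + 1) + (Unc C T).ncard := by
    calc S.ncard ≤ T.ncard + (g '' (Unc C T)).ncard := Set.ncard_union_le _ _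
    _ ≤ (w + 1) + (Unc C T).ncard := by
        have := Set.ncard_image_le (s := Unc C T) (f := g)
        omega
  have hSreal : (S.ncard : ℝ) ≤ (w : ℝ) + 1 + Real.sqrt ((q : ℝ) / (3 * Real.log q)) := by
    calc (S.ncard : ℝ) ≤ ((w + 1 + (Unc C T).ncard : ℕ) : ℝ) := by exact_mod_cast hScard
    _ = (w : ℝ) + 1 + ((Unc C T).ncard : ℝ) := by push_cast; ring
    _ ≤ (w : ℝ) + 1 + Real.sqrt ((q : ℝ) / (3 * Real.log q)) := by linarith
  have hlt : (S.ncard : ℝ) < (q : ℝ) + 1 :=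
    lt_of_le_of_lt hSreal (size_room q w hq5 hwq)
  have hSne : S ≠ C := by
    intro h0
    rw [h0, hCard0] at hlt
    push_cast at hlt
    linarith
  have hproper : S ⊂ C := Set.ssubset_iff_subset_ne.2 ⟨hSC, hSne⟩
  have htle : tAC C ≤ S.ncard := Nat.sInf_le ⟨S, ⟨hproper, hcov⟩, rfl⟩
  calc (tAC C : ℝ) ≤ (S.ncard : ℝ) := by exact_mod_cast htle
  _ ≤ _ := hSreal
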